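/- For the quantum SIR recurrence, the total population is conserved: xₙ + yₙ + zₙ = x₀ + y₀ + z₀ for every n ≥ 0. -/
import Mathlib

open Finset Filter Topology

theorem quantum_sir_conservation
(b c q t₀ : ℝ) (x y z : ℕ → ℝ)
    (hb : 0 < b) (hc : 0 < c) (hq : 1 < q) (ht : 0 < t₀)
    (hx0 : 0 < x 0) (hy0 : 0 < y 0) (hz0 : 0 ≤ z 0)
    (hrecx : ∀ n : ℕ, x (n + 1) =
      x n * (x n + y n) / (x n + y n * (1 + b * (q - 1) * (q ^ n * t₀))))
    (hrecy : ∀ n : ℕ, y (n + 1) =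
      y n * (1 + b * (q - 1) * (q ^ n * t₀)) * (x n + y n) /
        ((1 + c * (q - 1) * (q ^ n * t₀)) *
          (x n + y n * (1 + b * (q - 1) * (q ^ n * t₀)))))
    (hrecz : ∀ n : ℕ, z (n + 1) =
      c * (q - 1) * (q ^ n * t₀) *
        (y n * (1 + b * (q - 1) * (q ^ n * t₀)) * (x n + y n)) /
        ((1 + c * (q - 1) * (q ^ n * t₀)) *
          (x n + y n * (1 + b * (q - 1) * (q ^ n * t₀)))) + z n) :
    ∀ n : ℕ, x n + y n + z n = x 0 + y 0 + z 0 := by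
  have key : ∀ n : ℕ, 0 < x n ∧ 0 < y n ∧ x n + y n + z n = x 0 + y 0 + z 0 := by
    intro n
    induction n with
    | zero => exact ⟨hx0, hy0, rfl⟩
    | succ n ih =>
      obtain ⟨hx, hy, hs⟩ := ih
      have hτ : 0 < q ^ n * t₀ := by positivity
      have hq1 : (0:ℝ) < q - 1 := by linarith
      have hbτ : (0:ℝ) < 1 + b * (q - 1) * (q ^ n * t₀) := by
        have := mul_pos (mul_pos hb hq1) hτ; linarith
      have hcτ : (0:ℝ) < 1 + c * (q - 1) * (q ^ n * t₀) := by
        have := mul_pos (mul_pos hc hq1) hτ; linarith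
      have hD : (0:ℝ) < x n + y n * (1 + b * (q - 1) * (q ^ n * t₀)) := by positivity
      refine ⟨?_, ?_, ?_⟩
      · rw [hrecx]; positivity
      · rw [hrecy]; positivity
      · rw [hrecx, hrecy, hrecz]
        rw [← hs]
        field_simp
        ring
  exact fun n => (key n).2.2
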